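/- For every real k and every complex ρ, the characteristic polynomial of the LM-architecture factors as ρ² + (k−1)ρ − k = (ρ − 1)·(ρ + k), so its roots are exactly 1 and −k. Moreover, this polynomial satisfies the root condition (all complex roots have modulus at most 1, and every root of modulus exactly 1 is simple) if and only if −1 < k ≤ 1. -/

import Mathlib

open Polynomial

noncomputable def lmCharPoly (k : ℝ) : Polynomial ℂ :=
  X ^ 2 + C ((k : ℂ) - 1) * X - C (k : ℂ)

lemma lm_factor (k : ℝ) : lmCharPoly k = (X - C 1) * (X - C (-(k:ℂ))) := by
  unfold lmCharPoly
  simp only [map_neg, map_one, map_sub]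
  ring

lemma lm_mult (k : ℝ) (z : ℂ) :
    (lmCharPoly k).rootMultiplicity z =
      (if z = (1:ℂ) then 1 else 0) + (if z = -(k:ℂ) then 1 else 0) := by
  rw [lm_factor, rootMultiplicity_mul (by
    apply mul_ne_zero <;> exact X_sub_C_ne_zero _)]
  rw [rootMultiplicity_X_sub_C, rootMultiplicity_X_sub_C]

theorem lm_charpoly_root_condition (k : ℝ) :
    (∀ ρ : ℂ, ρ ^ 2 + ((k : ℂ) - 1) * ρ - (k : ℂ) = (ρ - 1) * (ρ + (k : ℂ))) ∧
    (∀ z : ℂ, z ^ 2 + ((k : ℂ) - 1) * z - (k : ℂ) = 0 ↔ z = 1 ∨ z = -(k : ℂ)) ∧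
    (((∀ z : ℂ, (lmCharPoly k).IsRoot z → ‖z‖ ≤ 1) ∧
        (∀ z : ℂ, (lmCharPoly k).IsRoot z → ‖z‖ = 1 →
          (lmCharPoly k).rootMultiplicity z = 1))
      ↔ (-1 < k ∧ k ≤ 1)) := by
  have hroot : ∀ z : ℂ, (lmCharPoly k).IsRoot z ↔ z = 1 ∨ z = -(k:ℂ) := by
    intro z
    rw [lm_factor]
    simp only [IsRoot, eval_mul, eval_sub, eval_X, eval_C, mul_eq_zero, sub_eq_zero]
  refine ⟨fun ρ => by ring, fun z => ?_, ?_⟩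
  · constructor
    · intro h
      have : (z - 1) * (z + (k:ℂ)) = 0 := by rw [← h]; ring
      rcases mul_eq_zero.mp this with h | h
      · left; linear_combination h
      · right; linear_combination h
    · rintro (rfl | rfl) <;> ring
  · constructor
    · rintro ⟨h1, h2⟩
      have hk : ‖(-(k:ℂ))‖ ≤ 1 := h1 _ ((hroot _).mpr (Or.inr rfl))
      simp [Complex.norm_real] at hk
      have habs : |k| ≤ 1 := hk
      have hne : k ≠ -1 := by
        intro hkm
        have := h2 1 ((hroot _).mpr (Or.inl rfl)) (by simp)
        rw [lm_mult] at this
        subst hkm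
        norm_num at this
      constructor
      · rcases lt_or_eq_of_le (neg_le_of_abs_le habs) with h | h
        · exact h
        · exact absurd h.symm hne
      · exact le_of_abs_le habs
    · rintro ⟨hlt, hle⟩
      have habs : |k| ≤ 1 := abs_le.mpr ⟨hlt.le, hle⟩
      constructor
      · intro z hz
        rcases (hroot z).mp hz with rfl | rfl
        · simp
        · simpa [Complex.norm_real] using habs
      · intro z hz hz1
        rw [lm_mult]
        have hne : -(k:ℂ) ≠ 1 := by
          intro h
          have : (k:ℂ) = -1 := by linear_combination -h
          have : k = -1 := by exact_mod_cast this
          linarith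
        rcases (hroot z).mp hz with rfl | rfl
        · simp [Ne.symm hne]
        · rw [if_neg hne, if_pos rfl]
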